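/- Let A and B be finite index types with |A| = |B| = d ≥ 1, and let R be a positive semidefinite complex matrix indexed by (A × B) × (A × B). Then Tr[Rᵀ C] = 1 holds for every bistochastic channel Choi operator C indexed by (A × B) × (A × B) if and only if there exist traceless Hermitian matrices X_A (indexed by A) and X_B (indexed by B) such that R = (1/d)·1_{A×B} + X_A ⊗ 1_B + 1_A ⊗ X_B. -/

import Mathlib

open Matrix Kronecker ComplexOrder

lemma rclike_ofReal_complex (y : ℝ) : (RCLike.ofReal y : ℂ) = (y : ℂ) := rfl

lemma trace_transpose_mul' {n : Type*} [Fintype n] (M N : Matrix n n ℂ) :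
    (Mᵀ * N).trace = ∑ p : n, ∑ q : n, M p q * N p q := by
  rw [Matrix.trace]
  simp only [Matrix.diag, Matrix.mul_apply, Matrix.transpose_apply]
  rw [Finset.sum_comm]

lemma trace_mul_expand {n : Type*} [Fintype n] (M N : Matrix n n ℂ) :
    (M * N).trace = ∑ p : n, ∑ q : n, M p q * N q p := by
  simp [Matrix.trace, Matrix.mul_apply, Matrix.diag]

lemma pairB' {A B : Type*} [Fintype A] [Fintype B] [DecidableEq B]
    (X : Matrix A A ℂ) (N : Matrix (A × B) (A × B) ℂ) :
    ((X ⊗ₖ (1 : Matrix B B ℂ)) * N).trace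
      = ∑ a : A, ∑ a' : A, X a a' * (∑ b : B, N (a', b) (a, b)) := by
  rw [trace_mul_expand]
  simp only [Fintype.sum_prod_type, Matrix.kroneckerMap_apply, Matrix.one_apply,
    mul_ite, mul_one, mul_zero, ite_mul, zero_mul, Finset.sum_ite_eq,
    Finset.mem_univ, if_true]
  refine Finset.sum_congr rfl fun a _ => ?_
  rw [Finset.sum_comm]
  exact Finset.sum_congr rfl fun a' _ => (Finset.mul_sum _ _ _).symm

lemma pairA' {A B : Type*} [Fintype A] [Fintype B] [DecidableEq A]
    (X : Matrix B B ℂ) (N : Matrix (A × B) (A × B) ℂ) :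
    (((1 : Matrix A A ℂ) ⊗ₖ X) * N).trace
      = ∑ b : B, ∑ b' : B, X b b' * (∑ a : A, N (a, b') (a, b)) := by
  rw [trace_mul_expand]
  simp only [Fintype.sum_prod_type, Matrix.kroneckerMap_apply, Matrix.one_apply,
    ite_mul, one_mul, zero_mul]
  have step : ∀ (a : A) (b : B),
      (∑ a' : A, ∑ b' : B, if a = a' then X b b' * N (a', b') (a, b) else 0)
      = ∑ b' : B, X b b' * N (a, b') (a, b) := by
    intro a b
    rw [Finset.sum_comm]
    refine Finset.sum_congr rfl fun b' _ => ?_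
    simp
  simp only [step]
  rw [Finset.sum_comm]
  refine Finset.sum_congr rfl fun b _ => ?_
  rw [Finset.sum_comm]
  exact Finset.sum_congr rfl fun b' _ => (Finset.mul_sum _ _ _).symm

lemma herm_smul {n : Type*} (c : ℂ) (hc : star c = c) {M : Matrix n n ℂ}
    (hM : M.IsHermitian) : (c • M).IsHermitian := by
  unfold Matrix.IsHermitian at *
  rw [Matrix.conjTranspose_smul, hM, hc]

lemma pert_psd {n : Type*} [Fintype n] [DecidableEq n]
    (c : ℝ) (hc : 0 < c) (H : Matrix n n ℂ) (hH : H.IsHermitian) :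
    ∃ ε : ℝ, 0 < ε ∧ ((c : ℂ) • 1 + (ε : ℂ) • H).PosSemidef := by
  classical
  set F : ℝ := ∑ i, |hH.eigenvalues i| with hF
  have hF0 : 0 ≤ F := Finset.sum_nonneg fun i _ => abs_nonneg _
  refine ⟨c / (F + 1), by positivity, ?_⟩
  set ε : ℝ := c / (F + 1) with hε
  have hεpos : 0 < ε := by positivity
  have hbound : ∀ i, 0 ≤ c + ε * hH.eigenvalues i := by
    intro i
    have h1 : |hH.eigenvalues i| ≤ F :=
      Finset.single_le_sum (f := fun i => |hH.eigenvalues i|)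
        (fun i _ => abs_nonneg _) (Finset.mem_univ i)
    have h2 : ε * |hH.eigenvalues i| ≤ ε * F := by nlinarith
    have h3 : ε * F ≤ c := by
      rw [hε]; rw [div_mul_eq_mul_div, div_le_iff₀ (by positivity)]; nlinarith
    have := neg_abs_le (hH.eigenvalues i)
    nlinarith [abs_nonneg (hH.eigenvalues i)]
  set U : Matrix n n ℂ := (hH.eigenvectorUnitary : Matrix n n ℂ) with hU
  have hUU : U * star U = 1 := (Matrix.mem_unitaryGroup_iff).mp hH.eigenvectorUnitary.2
  have key : (c : ℂ) • 1 + (ε : ℂ) • H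
      = U * diagonal (fun i => ((c + ε * hH.eigenvalues i : ℝ) : ℂ)) * star U := by
    have hspec := hH.spectral_theorem
    have hdiag : diagonal (fun i => ((c + ε * hH.eigenvalues i : ℝ) : ℂ))
        = (c : ℂ) • 1 + (ε : ℂ) • diagonal (RCLike.ofReal ∘ hH.eigenvalues) := by
      ext i j
      by_cases h : i = j
      · subst h
        simp only [Matrix.diagonal_apply_eq, Matrix.add_apply, Matrix.smul_apply,
          Matrix.one_apply_eq, Function.comp_apply, smul_eq_mul, rclike_ofReal_complex]
        push_cast
        ring
      · simp [Matrix.diagonal_apply, Matrix.one_apply, h]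
    rw [hdiag]
    rw [Matrix.mul_add, Matrix.add_mul, Matrix.mul_smul, Matrix.smul_mul,
      Matrix.mul_smul, Matrix.smul_mul, Matrix.mul_one, hUU, ← hspec.trans (Unitary.conjStarAlgAut_apply _ _)]
  rw [key]
  exact Matrix.PosSemidef.mul_mul_conjTranspose_same
    (Matrix.posSemidef_diagonal_iff.mpr fun i => by
      rw [RCLike.nonneg_iff]; constructor <;> simp [hbound i]) U

/-- A PSD matrix `R` on `A × B` (with `|A| = |B| = d ≥ 1`) satisfies
`Tr[Rᵀ C] = 1` for every bistochastic channel Choi operator `C` if and only if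
`R = (1/d)·1 + X_A ⊗ 1_B + 1_A ⊗ X_B` for traceless Hermitian `X_A`, `X_B`. -/
theorem stmt1 {A B : Type*} [Fintype A] [Fintype B] [DecidableEq A] [DecidableEq B]
    (d : ℕ) (hd : 1 ≤ d) (hA : Fintype.card A = d) (hB : Fintype.card B = d)
    (R : Matrix (A × B) (A × B) ℂ) (hR : R.PosSemidef) :
    (∀ C : Matrix (A × B) (A × B) ℂ, C.PosSemidef →
      (∀ a a', (∑ b : B, C (a, b) (a', b)) = if a = a' then 1 else 0) →
      (∀ b b', (∑ a : A, C (a, b) (a, b')) = if b = b' then 1 else 0) →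
      (Rᵀ * C).trace = 1) ↔
    ∃ (XA : Matrix A A ℂ) (XB : Matrix B B ℂ),
      XA.IsHermitian ∧ XA.trace = 0 ∧ XB.IsHermitian ∧ XB.trace = 0 ∧
      R = (d : ℂ)⁻¹ • 1 + XA ⊗ₖ (1 : Matrix B B ℂ) + (1 : Matrix A A ℂ) ⊗ₖ XB := by
  have hd0 : (d : ℂ) ≠ 0 := Nat.cast_ne_zero.mpr (by omega)
  constructor
  · -- forward direction
    intro hyp
    -- Step 1: C₀ = d⁻¹ • 1 is a bistochastic Choi operator, giving trace R = d
    have hC0psd : ((d : ℂ)⁻¹ • (1 : Matrix (A × B) (A × B) ℂ)).PosSemidef := by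
      have h1 : ((d : ℂ)⁻¹ • (1 : Matrix (A × B) (A × B) ℂ))
          = Matrix.diagonal (fun _ => (d : ℂ)⁻¹) := by
        ext p q
        by_cases h : p = q <;> simp [Matrix.diagonal_apply, Matrix.one_apply, h]
      rw [h1]
      refine Matrix.posSemidef_diagonal_iff.mpr fun i => ?_
      rw [show (d : ℂ)⁻¹ = (((d : ℝ)⁻¹ : ℝ) : ℂ) by push_cast; ring]
      rw [RCLike.nonneg_iff]
      constructor <;> simp
    have hC0a : ∀ a a' : A,
        (∑ b : B, ((d : ℂ)⁻¹ • (1 : Matrix (A × B) (A × B) ℂ)) (a, b) (a', b))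
        = if a = a' then 1 else 0 := by
      intro a a'
      by_cases h : a = a'
      · subst h
        simp [Matrix.smul_apply, Matrix.one_apply, Finset.sum_const, hB,
          nsmul_eq_mul, mul_inv_cancel₀ hd0]
      · simp [Matrix.smul_apply, Matrix.one_apply, Prod.ext_iff, h]
    have hC0b : ∀ b b' : B,
        (∑ a : A, ((d : ℂ)⁻¹ • (1 : Matrix (A × B) (A × B) ℂ)) (a, b) (a, b'))
        = if b = b' then 1 else 0 := by
      intro b b'
      by_cases h : b = b'
      · subst h
        simp [Matrix.smul_apply, Matrix.one_apply, Finset.sum_const, hA,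
          nsmul_eq_mul, mul_inv_cancel₀ hd0]
      · simp [Matrix.smul_apply, Matrix.one_apply, Prod.ext_iff, h]
    have htrR : R.trace = (d : ℂ) := by
      have h0 := hyp _ hC0psd hC0a hC0b
      rw [Matrix.mul_smul, Matrix.mul_one, Matrix.trace_smul, Matrix.trace_transpose] at h0
      field_simp at h0
      rw [smul_eq_mul, one_div, mul_comm] at h0
      exact (mul_inv_eq_one₀ hd0).mp h0
    -- Step 2: definitions
    set TB : Matrix A A ℂ := Matrix.of (fun a a' => ∑ b : B, R (a, b) (a', b)) with hTB
    set TA : Matrix B B ℂ := Matrix.of (fun b b' => ∑ a : A, R (a, b) (a, b')) with hTA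
    set XA : Matrix A A ℂ := (d : ℂ)⁻¹ • TB - (d : ℂ)⁻¹ • 1 with hXA
    set XB : Matrix B B ℂ := (d : ℂ)⁻¹ • TA - (d : ℂ)⁻¹ • 1 with hXB
    set S : Matrix (A × B) (A × B) ℂ :=
      (d : ℂ)⁻¹ • 1 + XA ⊗ₖ (1 : Matrix B B ℂ) + (1 : Matrix A A ℂ) ⊗ₖ XB with hS
    set Δ : Matrix (A × B) (A × B) ℂ := R - S with hΔ
    -- traces
    have htrTB : TB.trace = (d : ℂ) := by
      rw [← htrR, Matrix.trace, Matrix.trace, Fintype.sum_prod_type]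
      rfl
    have htrTA : TA.trace = (d : ℂ) := by
      rw [← htrR, Matrix.trace, Matrix.trace, Fintype.sum_prod_type]
      rw [Finset.sum_comm]
      rfl
    have htrXA : XA.trace = 0 := by
      rw [hXA, Matrix.trace_sub, Matrix.trace_smul, Matrix.trace_smul, htrTB,
        Matrix.trace_one, hA]
      simp [inv_mul_cancel₀ hd0]
    have htrXB : XB.trace = 0 := by
      rw [hXB, Matrix.trace_sub, Matrix.trace_smul, Matrix.trace_smul, htrTA,
        Matrix.trace_one, hB]
      simp [inv_mul_cancel₀ hd0]
    -- entry expansion of S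
    have hSapp : ∀ (a a' : A) (b b' : B),
        S (a, b) (a', b') = (d : ℂ)⁻¹ * (if a = a' ∧ b = b' then 1 else 0)
          + XA a a' * (if b = b' then 1 else 0)
          + (if a = a' then 1 else 0) * XB b b' := by
      intro a a' b b'
      simp [hS, Matrix.add_apply, Matrix.smul_apply, Matrix.one_apply,
        Matrix.kroneckerMap_apply, Prod.ext_iff]
    -- key partial trace identities for Δ
    have keyB : ∀ a a' : A, (∑ b : B, Δ (a, b) (a', b)) = 0 := by
      intro a a'
      have expand : ∀ b : B, Δ (a, b) (a', b)
          = R (a, b) (a', b) - ((d : ℂ)⁻¹ * (if a = a' then 1 else 0)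
            + XA a a' + (if a = a' then 1 else 0) * XB b b) := by
        intro b
        rw [hΔ, Matrix.sub_apply, hSapp]
        simp
      rw [Finset.sum_congr rfl fun b _ => expand b]
      rw [Finset.sum_sub_distrib]
      have hsum2 : (∑ b : B, ((d : ℂ)⁻¹ * (if a = a' then 1 else 0)
            + XA a a' + (if a = a' then 1 else 0) * XB b b))
          = (d : ℂ) * ((d : ℂ)⁻¹ * (if a = a' then 1 else 0))
            + (d : ℂ) * XA a a' + (if a = a' then 1 else 0) * XB.trace := by
        rw [Finset.sum_add_distrib, Finset.sum_add_distrib, Finset.sum_const,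
          Finset.sum_const, ← Finset.mul_sum]
        simp [hB, nsmul_eq_mul, Matrix.trace]
      rw [hsum2, htrXB]
      have hXAe : XA a a' = (d : ℂ)⁻¹ * TB a a' - (d : ℂ)⁻¹ * (if a = a' then 1 else 0) := by
        simp [hXA, Matrix.sub_apply, Matrix.smul_apply, Matrix.one_apply]
      have hTBe : TB a a' = ∑ b : B, R (a, b) (a', b) := rfl
      rw [hXAe, ← hTBe]
      field_simp
      split_ifs <;> ring
    have keyA : ∀ b b' : B, (∑ a : A, Δ (a, b) (a, b')) = 0 := by
      intro b b'
      have expand : ∀ a : A, Δ (a, b) (a, b')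
          = R (a, b) (a, b') - ((d : ℂ)⁻¹ * (if b = b' then 1 else 0)
            + XA a a * (if b = b' then 1 else 0) + XB b b') := by
        intro a
        rw [hΔ, Matrix.sub_apply, hSapp]
        simp
      rw [Finset.sum_congr rfl fun a _ => expand a]
      rw [Finset.sum_sub_distrib]
      have hsum2 : (∑ a : A, ((d : ℂ)⁻¹ * (if b = b' then 1 else 0)
            + XA a a * (if b = b' then 1 else 0) + XB b b'))
          = (d : ℂ) * ((d : ℂ)⁻¹ * (if b = b' then 1 else 0))
            + XA.trace * (if b = b' then 1 else 0) + (d : ℂ) * XB b b' := by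
        rw [Finset.sum_add_distrib, Finset.sum_add_distrib, Finset.sum_const,
          Finset.sum_const, ← Finset.sum_mul]
        simp [hA, nsmul_eq_mul, Matrix.trace]
      rw [hsum2, htrXA]
      have hXBe : XB b b' = (d : ℂ)⁻¹ * TA b b' - (d : ℂ)⁻¹ * (if b = b' then 1 else 0) := by
        simp [hXB, Matrix.sub_apply, Matrix.smul_apply, Matrix.one_apply]
      have hTAe : TA b b' = ∑ a : A, R (a, b) (a, b') := rfl
      rw [hXBe, ← hTAe]
      field_simp
      split_ifs <;> ring
    -- trace of Δ is zero
    have htrΔ : Δ.trace = 0 := by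
      rw [Matrix.trace, Fintype.sum_prod_type]
      simp only [Matrix.diag]
      rw [Finset.sum_congr rfl fun a _ => keyB a a]
      simp
    -- Hermiticity
    have hconj : ∀ p q : A × B, (starRingEnd ℂ) (R q p) = R p q := by
      intro p q
      exact hR.1.apply p q
    have hTBH : TB.IsHermitian := by
      refine Matrix.IsHermitian.ext fun a a' => ?_
      show (starRingEnd ℂ) (TB a' a) = TB a a'
      rw [hTB]
      simp only [Matrix.of_apply, map_sum]
      exact Finset.sum_congr rfl fun b _ => hconj (a, b) (a', b)
    have hTAH : TA.IsHermitian := by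
      refine Matrix.IsHermitian.ext fun b b' => ?_
      show (starRingEnd ℂ) (TA b' b) = TA b b'
      rw [hTA]
      simp only [Matrix.of_apply, map_sum]
      exact Finset.sum_congr rfl fun a _ => hconj (a, b) (a, b')
    have hdconj : star ((d : ℂ)⁻¹) = (d : ℂ)⁻¹ := by
      simp [star_inv₀]
    have hXAH : XA.IsHermitian := by
      rw [hXA]
      exact (herm_smul _ hdconj hTBH).sub (herm_smul _ hdconj Matrix.isHermitian_one)
    have hXBH : XB.IsHermitian := by
      rw [hXB]
      exact (herm_smul _ hdconj hTAH).sub (herm_smul _ hdconj Matrix.isHermitian_one)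
    have hkronH : ∀ (M : Matrix A A ℂ) (N : Matrix B B ℂ),
        M.IsHermitian → N.IsHermitian → (M ⊗ₖ N).IsHermitian := by
      intro M N hM hN
      refine Matrix.IsHermitian.ext fun p q => ?_
      show (starRingEnd ℂ) ((M ⊗ₖ N) q p) = (M ⊗ₖ N) p q
      simp only [Matrix.kroneckerMap_apply, _root_.map_mul]
      exact congrArg₂ (· * ·) (hM.apply p.1 q.1) (hN.apply p.2 q.2)
    have hSH : S.IsHermitian := by
      rw [hS]
      exact (((herm_smul _ hdconj Matrix.isHermitian_one)).add
        (hkronH XA 1 hXAH Matrix.isHermitian_one)).add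
        (hkronH 1 XB Matrix.isHermitian_one hXBH)
    have hΔH : Δ.IsHermitian := hR.1.sub hSH
    -- Step 3: perturbation
    obtain ⟨ε, hεpos, hCpsd⟩ := pert_psd ((d : ℝ)⁻¹) (by positivity) Δᵀ hΔH.transpose
    have hcast : (((d : ℝ)⁻¹ : ℝ) : ℂ) = (d : ℂ)⁻¹ := by push_cast; ring
    rw [hcast] at hCpsd
    set C : Matrix (A × B) (A × B) ℂ := (d : ℂ)⁻¹ • 1 + (ε : ℂ) • Δᵀ with hC
    have hCa : ∀ a a' : A, (∑ b : B, C (a, b) (a', b)) = if a = a' then 1 else 0 := by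
      intro a a'
      rw [hC]
      simp only [Matrix.add_apply, Matrix.smul_apply, Matrix.transpose_apply, smul_eq_mul]
      rw [Finset.sum_add_distrib]
      have hz : (∑ b : B, (ε : ℂ) * Δ (a', b) (a, b)) = 0 := by
        rw [← Finset.mul_sum, keyB a' a, mul_zero]
      rw [hz, add_zero]
      simpa [Matrix.smul_apply, smul_eq_mul] using hC0a a a'
    have hCb : ∀ b b' : B, (∑ a : A, C (a, b) (a, b')) = if b = b' then 1 else 0 := by
      intro b b'
      rw [hC]
      simp only [Matrix.add_apply, Matrix.smul_apply, Matrix.transpose_apply, smul_eq_mul]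
      rw [Finset.sum_add_distrib]
      have hz : (∑ a : A, (ε : ℂ) * Δ (a, b') (a, b)) = 0 := by
        rw [← Finset.mul_sum, keyA b' b, mul_zero]
      rw [hz, add_zero]
      simpa [Matrix.smul_apply, smul_eq_mul] using hC0b b b'
    have hεC : (ε : ℂ) ≠ 0 := by
      simpa using ne_of_gt hεpos
    have hRΔ : (Δ * R).trace = 0 := by
      have h1 := hyp C hCpsd hCa hCb
      rw [hC, Matrix.mul_add, Matrix.trace_add, Matrix.mul_smul, Matrix.mul_one,
        Matrix.trace_smul, Matrix.trace_transpose, htrR, Matrix.mul_smul,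
        Matrix.trace_smul, ← Matrix.transpose_mul, Matrix.trace_transpose] at h1
      have h2 : ((d : ℂ)⁻¹ * (d : ℂ)) = 1 := inv_mul_cancel₀ hd0
      simp only [smul_eq_mul] at h1
      rw [h2] at h1
      have h3 : (ε : ℂ) * (Δ * R).trace = 0 := by linear_combination h1
      exact (mul_eq_zero.mp h3).resolve_left hεC
    have hSΔ : (S * Δ).trace = 0 := by
      rw [hS, Matrix.add_mul, Matrix.add_mul, Matrix.trace_add, Matrix.trace_add,
        Matrix.smul_mul, Matrix.one_mul, Matrix.trace_smul, htrΔ, pairB', pairA']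
      have z1 : (∑ a : A, ∑ a' : A, XA a a' * (∑ b : B, Δ (a', b) (a, b))) = 0 := by
        refine Finset.sum_eq_zero fun a _ => Finset.sum_eq_zero fun a' _ => ?_
        rw [keyB a' a, mul_zero]
      have z2 : (∑ b : B, ∑ b' : B, XB b b' * (∑ a : A, Δ (a, b') (a, b))) = 0 := by
        refine Finset.sum_eq_zero fun b _ => Finset.sum_eq_zero fun b' _ => ?_
        rw [keyA b' b, mul_zero]
      rw [z1, z2]
      simp
    have hΔΔ : (Δ * Δ).trace = 0 := by
      have : Δ * Δ = Δ * R - Δ * S := by rw [← Matrix.mul_sub, ← hΔ]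
      rw [this, Matrix.trace_sub, hRΔ, Matrix.trace_mul_comm, hSΔ, sub_zero]
    -- Δ = 0
    have hΔ0 : Δ = 0 := by
      have hsum : (∑ p : A × B, ∑ q : A × B, (Complex.normSq (Δ p q) : ℂ)) = 0 := by
        rw [← hΔΔ, trace_mul_expand]
        refine Finset.sum_congr rfl fun p _ => Finset.sum_congr rfl fun q _ => ?_
        have hqp : Δ q p = (starRingEnd ℂ) (Δ p q) := by
          rw [← hΔH.apply q p]; rfl
        rw [hqp, Complex.mul_conj]
      rw [show (∑ p : A × B, ∑ q : A × B, (Complex.normSq (Δ p q) : ℂ))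
          = ((∑ p : A × B, ∑ q : A × B, Complex.normSq (Δ p q) : ℝ) : ℂ) by push_cast; rfl,
        Complex.ofReal_eq_zero] at hsum
      have hnn : ∀ p q : A × B, 0 ≤ Complex.normSq (Δ p q) :=
        fun _ _ => Complex.normSq_nonneg _
      ext p q
      have h1 := (Finset.sum_eq_zero_iff_of_nonneg
        (fun p _ => Finset.sum_nonneg fun q _ => hnn p q)).mp hsum p (Finset.mem_univ p)
      have h2 := (Finset.sum_eq_zero_iff_of_nonneg
        (fun q _ => hnn p q)).mp h1 q (Finset.mem_univ q)
      simpa [Complex.normSq_eq_zero] using h2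
    have hRS : R = S := by
      have h : R - S = 0 := by rw [← hΔ]; exact hΔ0
      exact sub_eq_zero.mp h
    exact ⟨XA, XB, hXAH, htrXA, hXBH, htrXB, by rw [hRS, hS]⟩
  · -- reverse direction
    rintro ⟨XA, XB, hXAherm, hXAtr, hXBherm, hXBtr, hform⟩ C hC h1 h2
    have htrC : C.trace = (d : ℂ) := by
      rw [Matrix.trace, Fintype.sum_prod_type]
      simp only [Matrix.diag]
      calc (∑ a : A, ∑ b : B, C (a, b) (a, b)) = ∑ a : A, (1 : ℂ) := by
            refine Finset.sum_congr rfl fun a _ => ?_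
            simpa using h1 a a
        _ = (d : ℂ) := by simp [hA]
    rw [hform]
    rw [Matrix.transpose_add, Matrix.transpose_add, Matrix.transpose_smul,
      Matrix.transpose_one, ← Matrix.kroneckerMap_transpose, ← Matrix.kroneckerMap_transpose,
      Matrix.transpose_one, Matrix.transpose_one, Matrix.add_mul, Matrix.add_mul,
      Matrix.trace_add, Matrix.trace_add, Matrix.smul_mul, Matrix.one_mul,
      Matrix.trace_smul, htrC]
    have z1 : ((XAᵀ ⊗ₖ (1 : Matrix B B ℂ)) * C).trace = 0 := by
      rw [pairB']
      calc (∑ a : A, ∑ a' : A, XAᵀ a a' * (∑ b : B, C (a', b) (a, b)))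
          = ∑ a : A, ∑ a' : A, XA a' a * (if a' = a then 1 else 0) := by
            refine Finset.sum_congr rfl fun a _ => Finset.sum_congr rfl fun a' _ => ?_
            rw [Matrix.transpose_apply, h1 a' a]
        _ = ∑ a : A, XA a a := by
            refine Finset.sum_congr rfl fun a _ => ?_
            simp [Finset.sum_ite_eq]
        _ = 0 := hXAtr
    have z2 : (((1 : Matrix A A ℂ) ⊗ₖ XBᵀ) * C).trace = 0 := by
      rw [pairA']
      calc (∑ b : B, ∑ b' : B, XBᵀ b b' * (∑ a : A, C (a, b') (a, b)))
          = ∑ b : B, ∑ b' : B, XB b' b * (if b' = b then 1 else 0) := by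
            refine Finset.sum_congr rfl fun b _ => Finset.sum_congr rfl fun b' _ => ?_
            rw [Matrix.transpose_apply, h2 b' b]
        _ = ∑ b : B, XB b b := by
            refine Finset.sum_congr rfl fun b _ => ?_
            simp [Finset.sum_ite_eq]
        _ = 0 := hXBtr
    rw [z1, z2]
    simp [inv_mul_cancel₀ hd0]
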